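/- For complex z with |z − πn| ≥ π/4 for every integer n, the estimate e^{|Im z|} < 4|sin z| holds. -/

import Mathlib

set_option maxHeartbeats 1000000 in
/-- If |z − πn| ≥ π/4 for every integer n, then e^{|Im z|} < 4|sin z|. -/
theorem stmt_19 (z : ℂ) (h : ∀ n : ℤ, Real.pi / 4 ≤ ‖z - (n : ℂ) * Real.pi‖) :
    Real.exp |z.im| < 4 * ‖Complex.sin z‖ := by
  have hpi := Real.pi_pos
  have hpi2 := Real.two_le_pi
  set x := z.re with hx
  set y := z.im with hy
  -- |sin z|² = sin² x + sinh² y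
  have hre : (Complex.sin z).re = Real.sin x * Real.cosh y := by
    rw [Complex.sin_eq]
    simp [Complex.sin_ofReal_re, Complex.cosh_ofReal_re, hx, hy]
  have him : (Complex.sin z).im = Real.cos x * Real.sinh y := by
    rw [Complex.sin_eq]
    simp [Complex.cos_ofReal_re, Complex.sinh_ofReal_re, hx, hy]
  have hcosh : Real.cosh y ^ 2 = Real.sinh y ^ 2 + 1 := Real.cosh_sq y
  have hsc : Real.sin x ^ 2 + Real.cos x ^ 2 = 1 := Real.sin_sq_add_cos_sq x
  have key : ‖Complex.sin z‖ ^ 2 = Real.sin x ^ 2 + Real.sinh y ^ 2 := by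
    rw [Complex.sq_norm, Complex.normSq_apply, hre, him]
    nlinarith [hcosh, hsc]
  have habs : (0:ℝ) ≤ ‖Complex.sin z‖ := norm_nonneg _
  set n : ℤ := round (x / Real.pi) with hn
  set t : ℝ := x - n * Real.pi with ht
  have htle : |t| ≤ Real.pi / 2 := by
    have h1 : |x / Real.pi - n| ≤ 1 / 2 := abs_sub_round (x / Real.pi)
    have h2 : t = (x / Real.pi - n) * Real.pi := by field_simp [ht]; ring
    rw [h2, abs_mul, abs_of_pos hpi]
    nlinarith [h1]
  have hneg1 : ((-1:ℝ) ^ n) ^ 2 = 1 := by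
    rcases Int.even_or_odd n with he | he
    · rw [he.neg_one_zpow]; norm_num
    · rw [Odd.neg_one_zpow he]; norm_num
  have hsin2 : Real.sin x ^ 2 = Real.sin t ^ 2 := by
    rw [ht, Real.sin_sub_int_mul_pi, mul_pow, hneg1, one_mul]
  have hsint : 2 / Real.pi * |t| ≤ |Real.sin t| := by
    have h1 : Real.sin |t| ≤ |Real.sin t| := by
      rcases abs_cases t with ⟨h1, _⟩ | ⟨h1, _⟩
      · rw [h1]; exact le_abs_self _
      · rw [h1, Real.sin_neg]; exact neg_le_abs _
    exact le_trans (Real.mul_le_sin (abs_nonneg t) htle) h1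
  have hsint2 : (2 / Real.pi) ^ 2 * t ^ 2 ≤ Real.sin t ^ 2 := by
    have h2 : (2 / Real.pi * |t|) ^ 2 ≤ |Real.sin t| ^ 2 := by
      nlinarith [hsint, abs_nonneg t, abs_nonneg (Real.sin t),
        mul_nonneg (by positivity : (0:ℝ) ≤ 2 / Real.pi) (abs_nonneg t)]
    calc (2 / Real.pi) ^ 2 * t ^ 2 = (2 / Real.pi * |t|) ^ 2 := by
          rw [mul_pow, sq_abs]
      _ ≤ |Real.sin t| ^ 2 := h2
      _ = Real.sin t ^ 2 := sq_abs _
  -- from hypothesis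
  have hdist : Real.pi ^ 2 / 16 ≤ t ^ 2 + y ^ 2 := by
    have h1 := h n
    have h2 : ‖z - (n : ℂ) * Real.pi‖ ^ 2 = t ^ 2 + y ^ 2 := by
      rw [Complex.sq_norm, Complex.normSq_apply]
      simp [ht]
      ring
    have h3 : (Real.pi / 4) ^ 2 ≤ ‖z - (n : ℂ) * Real.pi‖ ^ 2 := by
      gcongr
    rw [h2] at h3
    nlinarith [h3]
  -- sinh bounds
  have hsinh_sq : y ^ 2 ≤ Real.sinh y ^ 2 := by
    have h1 : |y| ≤ Real.sinh |y| := Real.self_le_sinh_iff.2 (abs_nonneg y)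
    calc y ^ 2 = |y| ^ 2 := (sq_abs y).symm
      _ ≤ Real.sinh |y| ^ 2 := pow_le_pow_left₀ (abs_nonneg y) h1 2
      _ = Real.sinh y ^ 2 := by rw [← Real.abs_sinh, sq_abs]
  rcases le_or_gt |y| (Real.log 2 / 2) with hc | hc
  · -- small imaginary part: |sin z| ≥ 1/2 and exp |y| < 2
    have hlog : Real.log 2 / 2 < Real.log 2 := by
      have := Real.log_pos (by norm_num : (1:ℝ) < 2); linarith
    have hexp : Real.exp |y| < 2 := by
      calc Real.exp |y| ≤ Real.exp (Real.log 2 / 2) := Real.exp_le_exp.2 hc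
        _ < Real.exp (Real.log 2) := Real.exp_lt_exp.2 hlog
        _ = 2 := Real.exp_log (by norm_num)
    have hlb : (1:ℝ) / 4 ≤ ‖Complex.sin z‖ ^ 2 := by
      rw [key, hsin2]
      have hp2 : (2 / Real.pi) ^ 2 ≤ 1 := by
        rw [div_pow, div_le_one (by positivity)]
        nlinarith
      have hy2 : (2 / Real.pi) ^ 2 * y ^ 2 ≤ y ^ 2 := by
        nlinarith [hp2, sq_nonneg y]
      have h14 : (2 / Real.pi) ^ 2 * (Real.pi ^ 2 / 16) = 1 / 4 := by
        field_simp
        ring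
      nlinarith [hsint2, hsinh_sq, mul_le_mul_of_nonneg_left hdist
        (by positivity : (0:ℝ) ≤ (2 / Real.pi) ^ 2)]
    have habs2 : (1:ℝ) / 2 ≤ ‖Complex.sin z‖ := by
      nlinarith [hlb, habs]
    linarith
  · -- large imaginary part: |sin z| ≥ sinh |y|
    have hsinh_abs : Real.sinh |y| = |Real.sinh y| := (Real.abs_sinh y).symm
    have hsinh_nonneg : 0 ≤ Real.sinh |y| := by
      rw [hsinh_abs]; exact abs_nonneg _
    have hge : Real.sinh |y| ≤ ‖Complex.sin z‖ := by
      have h1 : Real.sinh |y| ^ 2 ≤ ‖Complex.sin z‖ ^ 2 := by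
        rw [key, hsinh_abs, sq_abs]
        nlinarith [sq_nonneg (Real.sin x)]
      nlinarith [h1, habs, hsinh_nonneg]
    have hexp2 : 2 < Real.exp |y| * Real.exp |y| := by
      rw [← Real.exp_add]
      calc (2:ℝ) = Real.exp (Real.log 2) := (Real.exp_log (by norm_num)).symm
        _ < Real.exp (|y| + |y|) := Real.exp_lt_exp.2 (by linarith)
    have hsinh_val : Real.sinh |y| = (Real.exp |y| - Real.exp (-|y|)) / 2 :=
      Real.sinh_eq |y|
    have hinv : Real.exp (-|y|) * Real.exp |y| = 1 := by
      rw [← Real.exp_add]; simp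
    have hepos := Real.exp_pos |y|
    have : Real.exp |y| < 4 * Real.sinh |y| := by
      rw [hsinh_val]
      nlinarith [hexp2, hinv, Real.exp_pos (-|y|)]
    linarith
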